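/- The second derivatives of the $B_{2,5}$ and $B_{3,6}$ potentials in their negative-sector variables stabilize: under the variable identification sending the Laurent variable and negative-sector variables of $\mathcal{F}_{2,5}$ (i.e., $t_5, t_4, t_3$ in its numbering) to those of $\mathcal{F}_{3,6}$ (i.e., $t_6, t_5, t_4$) and identifying the distinguished variables $t_2 \leftrightarrow t_3$, $t_1 \leftrightarrow t_2$ (after the rescaling $t^\epsilon = 4k\,\tilde t^\epsilon$ for positive-sector variables with $k=2$ resp. $k=3$, $t^{k+1} = 2\tilde t^0$, $t^l = 2\tilde t^{k+1-l}$, $t^\nu = 4(l-k)\tilde t^{k+1-\nu}$ for intermediate $\nu > k+1$), the equality $\frac{\partial^2 \mathcal{F}_{2,5}}{\partial t_3\, \partial t_4}(\tilde t) = \frac{\partial^2 \mathcal{F}_{3,6}}{\partial t_4\, \partial t_5}(\tilde t)$ holds as rational functions of the common rescaled variables $\tilde t$. -/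

import Mathlib

/-- Partial derivative in the `i`-th coordinate direction. -/
noncomputable def pd {n : ℕ} (i : Fin n) (f : (Fin n → ℝ) → ℝ) : (Fin n → ℝ) → ℝ :=
  fun x => fderiv ℝ f x (Pi.single i 1)

/-- The `B_{2,5}` potential `𝓕_{2,5}(t_1, …, t_5)`. -/
noncomputable def F25 : (Fin 5 → ℝ) → ℝ := fun t =>
  (t 4) ^ 6 / 10 + t 0 * t 3 * (t 4) ^ 3 / 6 + (t 0) ^ 2 * t 2 * t 4 / 16
    + t 1 * t 2 * t 4 / 2 + (t 0) ^ 5 / 7680 + t 0 * (t 1) ^ 2 / 16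
    + (t 0) ^ 2 * (t 3) ^ 2 / 192 + t 1 * (t 3) ^ 2 / 24
    + (t 2) ^ 2 * t 3 / (24 * t 4) - t 2 * (t 3) ^ 3 / (216 * (t 4) ^ 2)
    + (t 3) ^ 5 / (4320 * (t 4) ^ 3)

/-- The `B_{3,6}` potential `𝓕_{3,6}(t_1, …, t_6)`. -/
noncomputable def F36 : (Fin 6 → ℝ) → ℝ := fun t =>
  (t 0) ^ 7 / 3265920 + (t 1) ^ 2 * (t 0) ^ 3 / 2592 + (t 4) ^ 2 * (t 0) ^ 3 / 2592
    + t 3 * t 5 * (t 0) ^ 3 / 216 + t 4 * (t 5) ^ 3 * (t 0) ^ 2 / 24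
    + (t 5) ^ 6 * t 0 / 10 - (t 1) ^ 3 * t 0 / 432 + (t 2) ^ 2 * t 0 / 24
    + t 1 * (t 4) ^ 2 * t 0 / 144 + t 1 * t 3 * t 5 * t 0 / 12
    + t 1 * t 4 * (t 5) ^ 3 / 6 + t 2 * (t 4) ^ 2 / 24 + (t 1) ^ 2 * t 2 / 24
    + t 2 * t 3 * t 5 / 2 + (t 3) ^ 2 * t 4 / (24 * t 5)
    - t 3 * (t 4) ^ 3 / (216 * (t 5) ^ 2) + (t 4) ^ 5 / (4320 * (t 5) ^ 3)


private lemma HasFDerivAt.pow_real {E : Type*} [NormedAddCommGroup E] [NormedSpace ℝ E]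
    {f : E → ℝ} {f' : E →L[ℝ] ℝ} {x : E} (h : HasFDerivAt f f' x) (n : ℕ) :
    HasFDerivAt (fun y => f y ^ n) (((n : ℝ) * f x ^ (n - 1)) • f') x :=
  (hasDerivAt_pow n (f x)).comp_hasFDerivAt x h


private lemma HasFDerivAt.div_const {E : Type*} [NormedAddCommGroup E] [NormedSpace ℝ E]
    {f : E → ℝ} {f' : E →L[ℝ] ℝ} {x : E} (hf : HasFDerivAt f f' x) (c : ℝ) :
    HasFDerivAt (fun y => f y / c) (c⁻¹ • f') x := by
  simpa [div_eq_mul_inv] using hf.mul_const c⁻¹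

private lemma HasFDerivAt.div {E : Type*} [NormedAddCommGroup E] [NormedSpace ℝ E]
    {f g : E → ℝ} {f' g' : E →L[ℝ] ℝ} {x : E} (hf : HasFDerivAt f f' x)
    (hg : HasFDerivAt g g' x) (hx : g x ≠ 0) :
    HasFDerivAt (fun y => f y / g y)
      (f x • (-(g x ^ 2)⁻¹ • g') + (g x)⁻¹ • f') x := by
  have h := hf.mul ((hasDerivAt_inv hx).comp_hasFDerivAt x hg)
  simp only [div_eq_mul_inv]
  exact h


private lemma cons6_five (a b c d e f : ℝ) : ![a, b, c, d, e, f] 5 = f := rfl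
private lemma cons5_four (a b c d e : ℝ) : ![a, b, c, d, e] 4 = e := rfl

lemma pd_eq {n : ℕ} (i : Fin n) {f : (Fin n → ℝ) → ℝ} {x : Fin n → ℝ}
    {L : (Fin n → ℝ) →L[ℝ] ℝ} (h : HasFDerivAt f L x) :
    pd i f x = L (Pi.single i 1) := by
  rw [pd, h.fderiv]

lemma hP {n : ℕ} (x : Fin n → ℝ) (i : Fin n) : HasFDerivAt (fun x : Fin n → ℝ => x i)
    (ContinuousLinearMap.proj i : (Fin n → ℝ) →L[ℝ] ℝ) x := hasFDerivAt_apply i x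

/-- `∂𝓕_{2,5}/∂t_4` on `t_5 ≠ 0`. -/
noncomputable def g25 : (Fin 5 → ℝ) → ℝ := fun x =>
  x 0 * (x 4) ^ 3 / 6 + (x 0) ^ 2 * x 3 / 96 + x 1 * x 3 / 12
    + (x 2) ^ 2 / (24 * x 4) - x 2 * (x 3) ^ 2 / (72 * (x 4) ^ 2)
    + (x 3) ^ 4 / (864 * (x 4) ^ 3)

/-- `∂𝓕_{3,6}/∂t_5` on `t_6 ≠ 0`. -/
noncomputable def g36 : (Fin 6 → ℝ) → ℝ := fun x =>
  x 4 * (x 0) ^ 3 / 1296 + (x 5) ^ 3 * (x 0) ^ 2 / 24 + x 1 * x 4 * x 0 / 72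
    + x 1 * (x 5) ^ 3 / 6 + x 2 * x 4 / 12 + (x 3) ^ 2 / (24 * x 5)
    - x 3 * (x 4) ^ 2 / (72 * (x 5) ^ 2) + (x 4) ^ 4 / (864 * (x 5) ^ 3)

lemma pd3F25 (x : Fin 5 → ℝ) (hx : x 4 ≠ 0) : pd 3 F25 x = g25 x := by
  have hP := hP x
  have h24 : (24 : ℝ) * x 4 ≠ 0 := mul_ne_zero (by norm_num) hx
  have h216 : (216 : ℝ) * (x 4) ^ 2 ≠ 0 := mul_ne_zero (by norm_num) (pow_ne_zero _ hx)
  have h4320 : (4320 : ℝ) * (x 4) ^ 3 ≠ 0 := mul_ne_zero (by norm_num) (pow_ne_zero _ hx)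
  have h : HasFDerivAt F25 _ x :=
    ((((((((((((hP 4).pow 6).div_const 10).add
      ((((hP 0).mul (hP 3)).mul ((hP 4).pow 3)).div_const 6)).add
      (((((hP 0).pow 2).mul (hP 2)).mul (hP 4)).div_const 16)).add
      ((((hP 1).mul (hP 2)).mul (hP 4)).div_const 2)).add
      (((hP 0).pow 5).div_const 7680)).add
      (((hP 0).mul ((hP 1).pow 2)).div_const 16)).add
      ((((hP 0).pow 2).mul ((hP 3).pow 2)).div_const 192)).add
      (((hP 1).mul ((hP 3).pow 2)).div_const 24)).add
      ((((hP 2).pow 2).mul (hP 3)).div ((hP 4).const_mul 24) h24)).sub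
      (((hP 2).mul ((hP 3).pow 3)).div ((((hP 4).pow 2)).const_mul 216) h216)).add
      (((hP 3).pow 5).div ((((hP 4).pow 3)).const_mul 4320) h4320)
  rw [pd_eq 3 h]
  simp [g25, Pi.single_apply]
  field_simp
  ring

lemma pd4F36 (x : Fin 6 → ℝ) (hx : x 5 ≠ 0) : pd 4 F36 x = g36 x := by
  have hP := hP x
  have h24 : (24 : ℝ) * x 5 ≠ 0 := mul_ne_zero (by norm_num) hx
  have h216 : (216 : ℝ) * (x 5) ^ 2 ≠ 0 := mul_ne_zero (by norm_num) (pow_ne_zero _ hx)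
  have h4320 : (4320 : ℝ) * (x 5) ^ 3 ≠ 0 := mul_ne_zero (by norm_num) (pow_ne_zero _ hx)
  have h : HasFDerivAt F36 _ x :=
    ((((((((((((((((((hP 0).pow 7).div_const 3265920).add
      ((((hP 1).pow 2).mul ((hP 0).pow 3)).div_const 2592)).add
      ((((hP 4).pow 2).mul ((hP 0).pow 3)).div_const 2592)).add
      (((((hP 3).mul (hP 5)).mul ((hP 0).pow 3)).div_const 216))).add
      (((((hP 4).mul ((hP 5).pow 3)).mul ((hP 0).pow 2)).div_const 24))).add
      ((((hP 5).pow 6).mul (hP 0)).div_const 10)).sub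
      ((((hP 1).pow 3).mul (hP 0)).div_const 432)).add
      ((((hP 2).pow 2).mul (hP 0)).div_const 24)).add
      (((((hP 1).mul ((hP 4).pow 2)).mul (hP 0)).div_const 144))).add
      ((((((hP 1).mul (hP 3)).mul (hP 5)).mul (hP 0)).div_const 12))).add
      (((((hP 1).mul (hP 4)).mul ((hP 5).pow 3)).div_const 6))).add
      (((hP 2).mul ((hP 4).pow 2)).div_const 24)).add
      ((((hP 1).pow 2).mul (hP 2)).div_const 24)).add
      ((((hP 2).mul (hP 3)).mul (hP 5)).div_const 2)).add
      ((((hP 3).pow 2).mul (hP 4)).div ((hP 5).const_mul 24) h24)).sub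
      (((hP 3).mul ((hP 4).pow 3)).div ((((hP 5).pow 2)).const_mul 216) h216)).add
      (((hP 4).pow 5).div ((((hP 5).pow 3)).const_mul 4320) h4320)
  rw [pd_eq 4 h]
  simp [g36, Pi.single_apply]
  field_simp
  ring

/-- Stabilization of second derivatives in the negative sector (`d = 3`, `r = 1`):
after the rescalings `t^ε = 4k·s^ε` (positive sector), `t^{k+1} = 2 s^0`,
`t^ν = 4(l-k) s^{k+1-ν}` (intermediate), `t^l = 2 s^{k+1-l}` (Laurent variable) — i.e.
for `𝓕_{2,5}`: `(t_1,…,t_5) = (8 s_1, 8 s_2, 2 s_0, 12 s_{-1}, 2 s_{-2})` and for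
`𝓕_{3,6}`: `(t_1,…,t_6) = (12 s_1, 12 s_2, 12 s_3, 2 s_0, 12 s_{-1}, 2 s_{-2})` —
one has `(∂²𝓕_{2,5}/∂t_3∂t_4)(s̃) = (∂²𝓕_{3,6}/∂t_4∂t_5)(s̃)` as functions of the
common rescaled variables `s` on `s_{-2} ≠ 0`. -/
theorem stmt14 (s : ℤ → ℝ) (hs : s (-2) ≠ 0) :
    pd 2 (pd 3 F25) ![8 * s 1, 8 * s 2, 2 * s 0, 12 * s (-1), 2 * s (-2)]
      = pd 3 (pd 4 F36)
          ![12 * s 1, 12 * s 2, 12 * s 3, 2 * s 0, 12 * s (-1), 2 * s (-2)] := by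
  set p : Fin 5 → ℝ := ![8 * s 1, 8 * s 2, 2 * s 0, 12 * s (-1), 2 * s (-2)] with hp
  set q : Fin 6 → ℝ := ![12 * s 1, 12 * s 2, 12 * s 3, 2 * s 0, 12 * s (-1), 2 * s (-2)] with hq
  have hp4 : p 4 ≠ 0 := by
    show (2:ℝ) * s (-2) ≠ 0
    exact mul_ne_zero two_ne_zero hs
  have hq5 : q 5 ≠ 0 := by
    show (2:ℝ) * s (-2) ≠ 0
    exact mul_ne_zero two_ne_zero hs
  have ev25 : pd 3 F25 =ᶠ[nhds p] g25 := by
    have hU : IsOpen {x : Fin 5 → ℝ | x 4 ≠ 0} :=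
      isOpen_compl_singleton.preimage (continuous_apply 4)
    filter_upwards [hU.mem_nhds hp4] with x hx using pd3F25 x hx
  have ev36 : pd 4 F36 =ᶠ[nhds q] g36 := by
    have hU : IsOpen {x : Fin 6 → ℝ | x 5 ≠ 0} :=
      isOpen_compl_singleton.preimage (continuous_apply 5)
    filter_upwards [hU.mem_nhds hq5] with x hx using pd4F36 x hx
  have e1 : pd 2 (pd 3 F25) p = pd 2 g25 p := by
    simp only [pd]; rw [ev25.fderiv_eq]
  have e2 : pd 3 (pd 4 F36) q = pd 3 g36 q := by
    simp only [pd]; rw [ev36.fderiv_eq]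
  rw [e1, e2]
  have hPp := hP p
  have hPq := hP q
  have h24p : (24 : ℝ) * p 4 ≠ 0 := mul_ne_zero (by norm_num) hp4
  have h72p : (72 : ℝ) * (p 4) ^ 2 ≠ 0 := mul_ne_zero (by norm_num) (pow_ne_zero _ hp4)
  have h864p : (864 : ℝ) * (p 4) ^ 3 ≠ 0 := mul_ne_zero (by norm_num) (pow_ne_zero _ hp4)
  have h24q : (24 : ℝ) * q 5 ≠ 0 := mul_ne_zero (by norm_num) hq5
  have h72q : (72 : ℝ) * (q 5) ^ 2 ≠ 0 := mul_ne_zero (by norm_num) (pow_ne_zero _ hq5)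
  have h864q : (864 : ℝ) * (q 5) ^ 3 ≠ 0 := mul_ne_zero (by norm_num) (pow_ne_zero _ hq5)
  have h1 : HasFDerivAt g25 _ p :=
    ((((((hPp 0).mul ((hPp 4).pow 3)).div_const 6).add
      ((((hPp 0).pow 2).mul (hPp 3)).div_const 96)).add
      (((hPp 1).mul (hPp 3)).div_const 12)).add
      (((hPp 2).pow 2).div ((hPp 4).const_mul 24) h24p)).sub
      (((hPp 2).mul ((hPp 3).pow 2)).div (((hPp 4).pow 2).const_mul 72) h72p) |>.add
      (((hPp 3).pow 4).div (((hPp 4).pow 3).const_mul 864) h864p)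
  have h2 : HasFDerivAt g36 _ q :=
    ((((((((hPq 4).mul ((hPq 0).pow 3)).div_const 1296).add
      ((((hPq 5).pow 3).mul ((hPq 0).pow 2)).div_const 24)).add
      ((((hPq 1).mul (hPq 4)).mul (hPq 0)).div_const 72)).add
      (((hPq 1).mul ((hPq 5).pow 3)).div_const 6)).add
      (((hPq 2).mul (hPq 4)).div_const 12)).add
      (((hPq 3).pow 2).div ((hPq 5).const_mul 24) h24q)).sub
      (((hPq 3).mul ((hPq 4).pow 2)).div (((hPq 5).pow 2).const_mul 72) h72q) |>.add
      (((hPq 4).pow 4).div (((hPq 5).pow 3).const_mul 864) h864q)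
  rw [pd_eq 2 h1, pd_eq 3 h2]
  simp [hp, hq, Pi.single_apply, cons6_five, cons5_four]
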